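/- There do not exist polynomials P, Q ∈ ℂ[X], not both zero, such that for all but finitely many integers d ≥ 1 and for both signs ε ∈ {1, −1}, one has (d − 1)·P(exp(ε·π·i/(2d+1))) + d·Q(exp(ε·π·i/(2d+1))) = 0. -/

import Mathlib

open Complex Polynomial Filter

noncomputable def uu (ε : ℤ) (d : ℕ) : ℂ := (ε : ℂ) * Real.pi * Complex.I / (2 * d + 1)

lemma piI_ne : (Real.pi : ℂ) * Complex.I ≠ 0 :=
  mul_ne_zero (Complex.ofReal_ne_zero.mpr Real.pi_ne_zero) Complex.I_ne_zero

lemma denom_ne (d : ℕ) : (2 * (d : ℂ) + 1) ≠ 0 := by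
  have h : ((2 * d + 1 : ℕ) : ℂ) ≠ 0 := Nat.cast_ne_zero.mpr (by omega)
  push_cast at h
  convert h using 2

lemma eps_ne {ε : ℤ} (hε : ε = 1 ∨ ε = -1) : (ε : ℂ) ≠ 0 := by
  rcases hε with h | h <;> simp [h]

lemma uu_ne {ε : ℤ} (hε : ε = 1 ∨ ε = -1) (d : ℕ) : uu ε d ≠ 0 := by
  unfold uu
  exact div_ne_zero (mul_ne_zero (mul_ne_zero (eps_ne hε) (Complex.ofReal_ne_zero.mpr Real.pi_ne_zero)) Complex.I_ne_zero) (denom_ne d)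

lemma zz_ne_one {ε : ℤ} (hε : ε = 1 ∨ ε = -1) (d : ℕ) : Complex.exp (uu ε d) ≠ 1 := by
  unfold uu
  intro h
  rw [Complex.exp_eq_one_iff] at h
  obtain ⟨n, hn⟩ := h
  rw [div_eq_iff (denom_ne d)] at hn
  have h2 : (ε : ℂ) * ((Real.pi:ℂ) * Complex.I) = (n * 2 * (2 * d + 1)) * ((Real.pi:ℂ) * Complex.I) := by
    push_cast at hn ⊢; ring_nf at hn ⊢; linear_combination hn
  have h2' := mul_right_cancel₀ piI_ne h2
  have h3 : (ε : ℤ) = n * 2 * (2 * d + 1) := by exact_mod_cast h2'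
  have hdvd : (2:ℤ) ∣ ε := ⟨n * (2 * d + 1), by linarith [h3]⟩
  rcases hε with h | h <;> (rw [h] at hdvd; omega)

lemma inv_denom_tendsto : Tendsto (fun d : ℕ => ((2 * (d:ℝ) + 1)⁻¹ : ℝ)) atTop (nhds 0) := by
  apply tendsto_inv_atTop_zero.comp
  exact tendsto_atTop_add_const_right _ 1 (tendsto_natCast_atTop_atTop.const_mul_atTop two_pos)

lemma inv_denom_tendstoC : Tendsto (fun d : ℕ => (2 * (d:ℂ) + 1)⁻¹) atTop (nhds 0) := by
  have h := (Complex.continuous_ofReal.tendsto 0).comp inv_denom_tendsto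
  simp only [Function.comp, Complex.ofReal_zero] at h
  apply h.congr
  intro d; simp only [Function.comp_apply]; push_cast; ring

lemma uu_tendsto (ε : ℤ) : Tendsto (fun d => uu ε d) atTop (nhds 0) := by
  have h := (tendsto_const_nhds (x := (ε : ℂ) * Real.pi * Complex.I)).mul inv_denom_tendstoC
  rw [mul_zero] at h
  apply h.congr
  intro d; simp [uu, div_eq_mul_inv]

lemma zz_tendsto (ε : ℤ) : Tendsto (fun d => Complex.exp (uu ε d)) atTop (nhds 1) := by
  have h := (Complex.continuous_exp.tendsto 0).comp (uu_tendsto ε)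
  simpa [Function.comp_def, Complex.exp_zero] using h

lemma half_tendstoR : Tendsto (fun d : ℕ => (d:ℝ) / (2 * d + 1)) atTop (nhds (1/2)) := by
  have h : Tendsto (fun d : ℕ => (2 + 1/(d:ℝ))⁻¹) atTop (nhds ((2:ℝ)⁻¹)) := by
    have := ((tendsto_const_nhds (x := (2:ℝ))).add tendsto_one_div_atTop_nhds_zero_nat).inv₀ (by norm_num)
    simpa using this
  rw [show (1:ℝ)/2 = (2:ℝ)⁻¹ by norm_num]
  apply h.congr'
  filter_upwards [eventually_ge_atTop 1] with d hd
  have hd' : (d:ℝ) ≠ 0 := Nat.cast_ne_zero.mpr (by omega)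
  field_simp

lemma half_tendsto (ε : ℤ) :
    Tendsto (fun d : ℕ => (d:ℂ) * uu ε d) atTop (nhds ((ε : ℂ) * Real.pi * Complex.I / 2)) := by
  have h1 : Tendsto (fun d : ℕ => ((((d:ℝ) / (2 * d + 1)) : ℝ) : ℂ)) atTop (nhds ((1:ℂ)/2)) := by
    have h2 := (Complex.continuous_ofReal.tendsto (1/2)).comp half_tendstoR
    apply ((h2.congr (fun d => by simp only [Function.comp_apply])).congr (fun d => rfl)).mono_right
    simp
  have h := (tendsto_const_nhds (x := (ε : ℂ) * Real.pi * Complex.I)).mul h1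
  have : (ε : ℂ) * Real.pi * Complex.I * ((1:ℂ)/2) = (ε : ℂ) * Real.pi * Complex.I / 2 := by ring
  rw [this] at h
  apply h.congr
  intro d
  have := denom_ne d
  simp only [uu]
  push_cast
  field_simp

lemma slope_tendsto {ε : ℤ} (hε : ε = 1 ∨ ε = -1) :
    Tendsto (fun d : ℕ => (Complex.exp (uu ε d) - 1) / uu ε d) atTop (nhds 1) := by
  have hs := hasDerivAt_iff_tendsto_slope.mp (Complex.hasDerivAt_exp 0)
  rw [Complex.exp_zero] at hs
  have hu : Tendsto (fun d => uu ε d) atTop (nhdsWithin 0 {(0:ℂ)}ᶜ) :=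
    tendsto_nhdsWithin_of_tendsto_nhds_of_eventually_within _ (uu_tendsto ε)
      (Eventually.of_forall fun d => uu_ne hε d)
  have := hs.comp hu
  apply this.congr
  intro d
  simp [slope_def_field, Complex.exp_zero]

lemma main_limit {ε : ℤ} (hε : ε = 1 ∨ ε = -1) :
    Tendsto (fun d : ℕ => (d:ℂ) * (Complex.exp (uu ε d) - 1)) atTop
      (nhds ((ε : ℂ) * Real.pi * Complex.I / 2)) := by
  have h := (slope_tendsto hε).mul (half_tendsto ε)
  rw [one_mul] at h
  apply h.congr
  intro d
  have hu := uu_ne hε d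
  field_simp

lemma inv_nat_tendstoC : Tendsto (fun d : ℕ => ((d:ℂ))⁻¹) atTop (nhds 0) := by
  have hR : Tendsto (fun d : ℕ => ((d:ℝ))⁻¹) atTop (nhds 0) :=
    tendsto_inv_atTop_zero.comp tendsto_natCast_atTop_atTop
  have h := (Complex.continuous_ofReal.tendsto 0).comp hR
  simp only [Function.comp, Complex.ofReal_zero] at h
  apply h.congr
  intro d; simp only [Function.comp_apply]; push_cast; ring

def Hyp (P Q : Polynomial ℂ) : Prop :=
  ∃ N : ℕ, ∀ d : ℕ, N ≤ d → ∀ ε : ℤ, (ε = 1 ∨ ε = -1) →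
    ((d : ℂ) - 1) * P.eval (Complex.exp (uu ε d)) + (d : ℂ) * Q.eval (Complex.exp (uu ε d)) = 0

lemma factor_fact (A A₁ : Polynomial ℂ) (h : A = (X - C 1) * A₁) :
    (A = 0 → A₁ = 0) ∧ (A ≠ 0 → A₁.natDegree + 1 = A.natDegree) := by
  constructor
  · intro hA
    rw [hA] at h
    rcases mul_eq_zero.mp h.symm with h' | h'
    · exact absurd h' (X_sub_C_ne_zero 1)
    · exact h'
  · intro hA
    have hA1 : A₁ ≠ 0 := by rintro rfl; simp at h; exact hA h
    rw [h, natDegree_mul (X_sub_C_ne_zero 1) hA1, natDegree_X_sub_C]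
    ring

lemma ev_tendsto (R : Polynomial ℂ) (ε : ℤ) :
    Tendsto (fun d : ℕ => R.eval (Complex.exp (uu ε d))) atTop (nhds (R.eval 1)) := by
  have h := ((Polynomial.continuous R).tendsto 1).comp (zz_tendsto ε)
  exact h.congr fun d => rfl

lemma key : ∀ n : ℕ, ∀ P Q : Polynomial ℂ, P.natDegree + Q.natDegree < n → Hyp P Q →
    P = 0 ∧ Q = 0 := by
  intro n
  induction n with
  | zero => intro P Q h; omega
  | succ n ih =>
    intro P Q hdeg ⟨N, hN⟩
    by_cases h0 : P = 0 ∧ Q = 0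
    · exact h0
    -- eq1 : d * (P+Q).eval z = P.eval z
    have eq1 : ∀ d : ℕ, N ≤ d → ∀ ε : ℤ, (ε = 1 ∨ ε = -1) →
        (d : ℂ) * (P + Q).eval (Complex.exp (uu ε d)) = P.eval (Complex.exp (uu ε d)) := by
      intro d hd ε hε
      have h := hN d hd ε hε
      rw [eval_add]
      linear_combination h
    -- Step B : (P+Q).eval 1 = 0
    have hR1 : (P + Q).eval 1 = 0 := by
      have t1 := ev_tendsto (P + Q) 1
      have t2 : Tendsto (fun d : ℕ => (P + Q).eval (Complex.exp (uu 1 d))) atTop (nhds 0) := by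
        have tP := (ev_tendsto P 1).mul inv_nat_tendstoC
        rw [mul_zero] at tP
        apply tP.congr'
        filter_upwards [eventually_ge_atTop (max N 1)] with d hd
        have hd0 : (d : ℂ) ≠ 0 := Nat.cast_ne_zero.mpr (by omega)
        have he := eq1 d (le_trans (le_max_left _ _) hd) 1 (Or.inl rfl)
        rw [← he, mul_comm ((d:ℂ)) _, mul_assoc, mul_inv_cancel₀ hd0, mul_one]
      exact tendsto_nhds_unique t1 t2
    obtain ⟨S, hS⟩ := dvd_iff_isRoot.mpr hR1
    -- Step C : S.eval 1 relation
    have stepC : ∀ ε : ℤ, (ε = 1 ∨ ε = -1) →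
        (ε : ℂ) * Real.pi * Complex.I / 2 * S.eval 1 = P.eval 1 := by
      intro ε hε
      have tlhs : Tendsto (fun d : ℕ => (d:ℂ) * (P + Q).eval (Complex.exp (uu ε d))) atTop
          (nhds ((ε : ℂ) * Real.pi * Complex.I / 2 * S.eval 1)) := by
        have h := (main_limit hε).mul (ev_tendsto S ε)
        apply h.congr
        intro d
        rw [hS, eval_mul, eval_sub, eval_X, eval_C]
        ring
      have trhs : Tendsto (fun d : ℕ => (d:ℂ) * (P + Q).eval (Complex.exp (uu ε d))) atTop
          (nhds (P.eval 1)) := by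
        apply (ev_tendsto P ε).congr'
        filter_upwards [eventually_ge_atTop N] with d hd
        exact (eq1 d hd ε hε).symm
      exact tendsto_nhds_unique tlhs trhs
    have hS1 : S.eval 1 = 0 := by
      have h1 := stepC 1 (Or.inl rfl)
      have h2 := stepC (-1) (Or.inr rfl)
      push_cast at h1 h2
      have : (Real.pi : ℂ) * Complex.I * S.eval 1 = 0 := by linear_combination h1 - h2
      rcases mul_eq_zero.mp this with h | h
      · exact absurd h piI_ne
      · exact h
    have hP1 : P.eval 1 = 0 := by
      have := stepC 1 (Or.inl rfl)
      rw [hS1] at this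
      simpa using this.symm
    have hQ1 : Q.eval 1 = 0 := by
      have := hR1
      rw [eval_add, hP1, zero_add] at this
      exact this
    obtain ⟨P₁, hP₁⟩ := dvd_iff_isRoot.mpr hP1
    obtain ⟨Q₁, hQ₁⟩ := dvd_iff_isRoot.mpr hQ1
    -- Hyp P₁ Q₁
    have hyp1 : Hyp P₁ Q₁ := by
      refine ⟨N, fun d hd ε hε => ?_⟩
      have h := hN d hd ε hε
      rw [hP₁, hQ₁, eval_mul, eval_mul, eval_sub, eval_X, eval_C] at h
      have h2 : (Complex.exp (uu ε d) - 1) *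
          (((d : ℂ) - 1) * P₁.eval (Complex.exp (uu ε d)) +
            (d : ℂ) * Q₁.eval (Complex.exp (uu ε d))) = 0 := by linear_combination h
      rcases mul_eq_zero.mp h2 with h' | h'
      · exact absurd h' (sub_ne_zero.mpr (zz_ne_one hε d))
      · exact h'
    -- degree bound
    have hfd : P₁.natDegree + Q₁.natDegree < n := by
      obtain ⟨fP0, fPd⟩ := factor_fact P P₁ hP₁
      obtain ⟨fQ0, fQd⟩ := factor_fact Q Q₁ hQ₁
      rcases not_and_or.mp h0 with hP | hQ
      · have hPd := fPd hP
        by_cases hQz : Q = 0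
        · have : Q₁ = 0 := fQ0 hQz
          rw [this]
          simp only [natDegree_zero]
          omega
        · have hQd := fQd hQz
          omega
      · have hQd := fQd hQ
        by_cases hPz : P = 0
        · have : P₁ = 0 := fP0 hPz
          rw [this]
          simp only [natDegree_zero]
          omega
        · have hPd := fPd hPz
          omega
    obtain ⟨hP0, hQ0⟩ := ih P₁ Q₁ hfd hyp1
    rw [hP0] at hP₁
    rw [hQ0] at hQ₁
    simp at hP₁ hQ₁
    exact ⟨hP₁, hQ₁⟩

theorem linear_independence_on_Gamma :
    ¬ ∃ (P Q : Polynomial ℂ), (P ≠ 0 ∨ Q ≠ 0) ∧ ∃ N : ℕ, ∀ d : ℕ, N ≤ d → 1 ≤ d →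
      ∀ ε : ℤ, (ε = 1 ∨ ε = -1) →
        ((d : ℂ) - 1) *
            P.eval (Complex.exp ((ε : ℂ) * Real.pi * Complex.I / (2 * d + 1))) +
          (d : ℂ) *
            Q.eval (Complex.exp ((ε : ℂ) * Real.pi * Complex.I / (2 * d + 1))) = 0 := by
  rintro ⟨P, Q, hPQ, N, hmain⟩
  have hyp : Hyp P Q := by
    refine ⟨max N 1, fun d hd ε hε => ?_⟩
    exact hmain d (le_trans (le_max_left _ _) hd) (le_trans (le_max_right _ _) hd) ε hε
  obtain ⟨hP, hQ⟩ := key (P.natDegree + Q.natDegree + 1) P Q (by omega) hyp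
  tauto
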